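/- Let λ ∈ ℂ \ {0} and * ∈ {p, m}, suppose K_* ≠ 0, and let w ∈ ℂ satisfy w² = J_*² − 4 K_* K_*'. Then the vector v = (−(λ/(2 b_*))(J_* + w − 2 a_* e^{2γ} λ⁻¹ K_*), K_*) ∈ ℂ² is nonzero and satisfies T_* v = ζ v with ζ = (λ + λ⁻¹ − 2 p a_* cosh(2γ) + w)/(2 b_* q). -/

import Mathlib

noncomputable section
open Complex Matrix

/-- The transfer matrix `T_*` for parameters `(a_*, b_*) = (aS, bS)`. -/
def Tmat (γ p aS : ℝ) (q bS lam : ℂ) : Matrix (Fin 2) (Fin 2) ℂ :=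
  (1 / (bS * q * lam)) •
    !![lam ^ 2 - 2 * (aS : ℂ) * (p : ℂ) * (Real.cosh (2 * γ) : ℂ) * lam + (aS : ℂ) ^ 2,
        -(starRingEnd ℂ) bS * ((p : ℂ) * lam - (aS : ℂ) * (Real.exp (2 * γ) : ℂ));
      -(bS * ((p : ℂ) * lam - (aS : ℂ) * (Real.exp (-(2 * γ)) : ℂ))),
        ((‖bS‖ : ℝ) : ℂ) ^ 2]

/-- `K_* = p λ − a_* e^{−2γ}`. -/
def Kc (γ p aS : ℝ) (lam : ℂ) : ℂ := (p : ℂ) * lam - (aS : ℂ) * (Real.exp (-(2 * γ)) : ℂ)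

/-- `K_*' = a_* e^{2γ} − p λ⁻¹`. -/
def Kc' (γ p aS : ℝ) (lam : ℂ) : ℂ := (aS : ℂ) * (Real.exp (2 * γ) : ℂ) - (p : ℂ) * lam⁻¹

/-- `J_* = λ − λ⁻¹ + 2 p a_* sinh(2γ)`. -/
def Jc (γ p aS : ℝ) (lam : ℂ) : ℂ :=
  lam - lam⁻¹ + 2 * (p : ℂ) * (aS : ℂ) * (Real.sinh (2 * γ) : ℂ)

set_option maxHeartbeats 4000000

/-- For `K_* ≠ 0` and `w² = J_*² − 4 K_* K_*'`, the vector `v` below is a nonzero eigenvector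
of `T_*` with eigenvalue `ζ = (λ + λ⁻¹ − 2 p a_* cosh(2γ) + w)/(2 b_* q)`. -/
theorem eigenvector_of_transfer_matrix (γ p : ℝ) (hp : p ∈ Set.Ioo (-1 : ℝ) 1) (q : ℂ)
    (hq : p ^ 2 + ‖q‖ ^ 2 = 1)
    (aP aM : ℝ) (haP : aP ∈ Set.Ioo (-1 : ℝ) 1) (haM : aM ∈ Set.Ioo (-1 : ℝ) 1)
    (bP bM : ℂ) (hbP : aP ^ 2 + ‖bP‖ ^ 2 = 1) (hbM : aM ^ 2 + ‖bM‖ ^ 2 = 1) (lam : ℂ) (hlam : lam ≠ 0)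
    (aS : ℝ) (bS : ℂ) (hmem : (aS, bS) = (aP, bP) ∨ (aS, bS) = (aM, bM))
    (hK : Kc γ p aS lam ≠ 0) (w : ℂ)
    (hw : w ^ 2 = Jc γ p aS lam ^ 2 - 4 * Kc γ p aS lam * Kc' γ p aS lam) :
    (![-(lam / (2 * bS)) * (Jc γ p aS lam + w -
          2 * (aS : ℂ) * (Real.exp (2 * γ) : ℂ) * lam⁻¹ * Kc γ p aS lam),
        Kc γ p aS lam] : Fin 2 → ℂ) ≠ 0 ∧
    (Tmat γ p aS q bS lam).mulVec
        ![-(lam / (2 * bS)) * (Jc γ p aS lam + w -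
            2 * (aS : ℂ) * (Real.exp (2 * γ) : ℂ) * lam⁻¹ * Kc γ p aS lam),
          Kc γ p aS lam] =
      ((lam + lam⁻¹ - 2 * (p : ℂ) * (aS : ℂ) * (Real.cosh (2 * γ) : ℂ) + w) / (2 * bS * q)) •
        ![-(lam / (2 * bS)) * (Jc γ p aS lam + w -
            2 * (aS : ℂ) * (Real.exp (2 * γ) : ℂ) * lam⁻¹ * Kc γ p aS lam),
          Kc γ p aS lam] := by

  -- basic nonvanishing facts
  have habs : (aS:ℝ) ^ 2 + ‖bS‖ ^ 2 = 1 := by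
    rcases hmem with h | h <;> (injection h with h1 h2; subst h1; subst h2; assumption)
  have haS : aS ∈ Set.Ioo (-1:ℝ) 1 := by
    rcases hmem with h | h <;> (injection h with h1 h2; subst h1; first | exact haP | exact haM)
  have hbS : bS ≠ 0 := by
    intro h
    rcases haS with ⟨h1, h2⟩
    simp [h] at habs
    rcases habs with h3 | h3 <;> linarith
  have hq0 : q ≠ 0 := by
    intro h
    rcases hp with ⟨h1, h2⟩
    simp [h] at hq
    rcases hq with h3 | h3 <;> linarith
  have habs2 : (((‖bS‖ : ℝ) : ℂ)) ^ 2 = 1 - (aS:ℂ) ^ 2 := by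
    have h : (‖bS‖) ^ 2 = 1 - aS ^ 2 := by linarith
    exact_mod_cast congrArg (Complex.ofReal) h
  have hm : bS * (starRingEnd ℂ) bS = 1 - (aS:ℂ) ^ 2 := by
    rw [Complex.mul_conj, Complex.normSq_eq_norm_sq]
    push_cast
    exact habs2
  have hconj : (starRingEnd ℂ) bS = (1 - (aS:ℂ) ^ 2) / bS := by
    rw [eq_div_iff hbS]
    linear_combination hm
  have hE : (Real.exp (2 * γ) : ℂ) ≠ 0 := by
    exact_mod_cast Real.exp_ne_zero _
  have hEneg : (Real.exp (-(2 * γ)) : ℂ) = ((Real.exp (2 * γ) : ℂ))⁻¹ := by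
    rw [Real.exp_neg]; push_cast; ring
  have hcosh : (Real.cosh (2 * γ) : ℂ) =
      ((Real.exp (2 * γ) : ℂ) + ((Real.exp (2 * γ) : ℂ))⁻¹) / 2 := by
    rw [Real.cosh_eq, Real.exp_neg]; push_cast [Real.exp_ne_zero]; ring
  have hsinh : (Real.sinh (2 * γ) : ℂ) =
      ((Real.exp (2 * γ) : ℂ) - ((Real.exp (2 * γ) : ℂ))⁻¹) / 2 := by
    rw [Real.sinh_eq, Real.exp_neg]; push_cast [Real.exp_ne_zero]; ring
  obtain ⟨E, hEdef⟩ : ∃ E : ℂ, (Real.exp (2 * γ) : ℂ) = E := ⟨_, rfl⟩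
  rw [hEdef] at hE hEneg hcosh hsinh
  constructor
  · intro h
    exact hK (by simpa using congrFun h 1)
  · simp only [Kc, Kc', Jc, hEneg, hcosh, hsinh, hEdef] at hw
    funext i
    fin_cases i <;>
      simp only [Tmat, Kc, Kc', Jc, Matrix.mulVec, dotProduct, Fin.sum_univ_two,
        Fin.mk_zero, Fin.mk_one, Matrix.smul_apply, Matrix.cons_val', Matrix.cons_val_zero,
        Matrix.cons_val_one, Matrix.head_cons, Matrix.empty_val', Matrix.cons_val_fin_one,
        Matrix.head_fin_const, Matrix.of_apply, Pi.smul_apply, smul_eq_mul, hconj, habs2,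
        hEneg, hcosh, hsinh, hEdef] <;>
      field_simp [hbS, hq0, hlam, hE] <;>
      field_simp [hlam, hE] at hw
    · linear_combination hw
    · ring
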